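/- Let A, B be n×n complex matrices with (A,B) of maximal rank, and let U be a unitary matrix leaving Ker A and Ker B invariant. If a matrix C satisfies AUA⋆ = C·P_A and BUB⋆ = C·P_B (where P_A, P_B are the orthogonal projections onto Ran A, Ran B), then C is invertible. -/

import Mathlib

open Matrix

/-- `X` satisfies the four Penrose conditions for `A`. -/
def IsMoorePenrose {n : ℕ} (A X : Matrix (Fin n) (Fin n) ℂ) : Prop :=
  A * X * A = A ∧ X * A * X = X ∧ (A * X)ᴴ = A * X ∧ (X * A)ᴴ = X * A

/-- Key step: if `U(Ker A) ⊆ Ker A` and `A U A⋆ = C P_A` with `P_A` an idempotent whose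
range is `Ran A`, then `A (U x) = C (A x)` for all `x`. -/
lemma intertwine {n : ℕ} (A Astar U C PA : Matrix (Fin n) (Fin n) ℂ)
    (hMPA : IsMoorePenrose A Astar)
    (hkerA : (LinearMap.ker A.mulVecLin).map U.mulVecLin ≤ LinearMap.ker A.mulVecLin)
    (hPAidem : PA * PA = PA)
    (hPArange : LinearMap.range PA.mulVecLin = LinearMap.range A.mulVecLin)
    (hCA : A * U * Astar = C * PA) (x : Fin n → ℂ) :
    A *ᵥ (U *ᵥ x) = C *ᵥ (A *ᵥ x) := by
  obtain ⟨h1, -, -, -⟩ := hMPA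
  -- the component of x in Ker A
  set k : Fin n → ℂ := x - (Astar * A) *ᵥ x with hk
  have hkker : A *ᵥ k = 0 := by
    have h2 : A *ᵥ ((Astar * A) *ᵥ x) = A *ᵥ x := by
      rw [Matrix.mulVec_mulVec, ← Matrix.mul_assoc, h1]
    rw [hk, Matrix.mulVec_sub, h2, sub_self]
  have hUk : A *ᵥ (U *ᵥ k) = 0 := by
    have : U *ᵥ k ∈ LinearMap.ker A.mulVecLin :=
      hkerA ⟨k, by simpa [Matrix.mulVecLin] using hkker, rfl⟩
    simpa [Matrix.mulVecLin] using this
  have hx : x = (Astar * A) *ᵥ x + k := by rw [hk]; abel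
  -- PA fixes Ran A
  have hPAfix : PA *ᵥ (A *ᵥ x) = A *ᵥ x := by
    have : A *ᵥ x ∈ LinearMap.range PA.mulVecLin := by
      rw [hPArange]; exact ⟨x, rfl⟩
    obtain ⟨z, hz⟩ := this
    simp only [Matrix.mulVecLin_apply] at hz
    calc PA *ᵥ (A *ᵥ x) = PA *ᵥ (PA *ᵥ z) := by rw [hz]
      _ = (PA * PA) *ᵥ z := by rw [Matrix.mulVec_mulVec]
      _ = PA *ᵥ z := by rw [hPAidem]
      _ = A *ᵥ x := hz
  calc A *ᵥ (U *ᵥ x)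
      = A *ᵥ (U *ᵥ ((Astar * A) *ᵥ x)) + A *ᵥ (U *ᵥ k) := by
        rw [← Matrix.mulVec_add, ← Matrix.mulVec_add, ← hx]
    _ = A *ᵥ (U *ᵥ ((Astar * A) *ᵥ x)) := by rw [hUk, add_zero]
    _ = (A * U * Astar) *ᵥ (A *ᵥ x) := by
        simp only [Matrix.mulVec_mulVec, Matrix.mul_assoc]
    _ = (C * PA) *ᵥ (A *ᵥ x) := by rw [hCA]
    _ = C *ᵥ (PA *ᵥ (A *ᵥ x)) := by rw [← Matrix.mulVec_mulVec]
    _ = C *ᵥ (A *ᵥ x) := by rw [hPAfix]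

lemma range_le {n : ℕ} (A Astar U C PA : Matrix (Fin n) (Fin n) ℂ)
    (hMPA : IsMoorePenrose A Astar)
    (hU : U ∈ Matrix.unitaryGroup (Fin n) ℂ)
    (hkerA : (LinearMap.ker A.mulVecLin).map U.mulVecLin ≤ LinearMap.ker A.mulVecLin)
    (hPAidem : PA * PA = PA)
    (hPArange : LinearMap.range PA.mulVecLin = LinearMap.range A.mulVecLin)
    (hCA : A * U * Astar = C * PA) :
    LinearMap.range A.mulVecLin ≤ LinearMap.range C.mulVecLin := by
  rintro y ⟨x, rfl⟩
  have hUunit : IsUnit U := ⟨⟨U, star U, hU.2, hU.1⟩, rfl⟩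
  obtain ⟨x', hx'⟩ : ∃ x', U *ᵥ x' = x := Matrix.mulVec_surjective_iff_isUnit.2 hUunit x
  refine ⟨A *ᵥ x', ?_⟩
  simp only [Matrix.mulVecLin_apply]
  rw [← intertwine A Astar U C PA hMPA hkerA hPAidem hPArange hCA x', hx']

/-- If `(A,B)` has maximal rank, `U` is a unitary leaving `Ker A` and `Ker B` invariant and
`C` satisfies `AUA⋆ = C P_A` and `BUB⋆ = C P_B`, then `C` is invertible. -/
theorem stmt_6 (n : ℕ) (A B Astar Bstar U C PA PB : Matrix (Fin n) (Fin n) ℂ)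
    (hrank : (Matrix.fromCols A B).rank = n)
    (hMPA : IsMoorePenrose A Astar) (hMPB : IsMoorePenrose B Bstar)
    (hU : U ∈ Matrix.unitaryGroup (Fin n) ℂ)
    (hkerA : (LinearMap.ker A.mulVecLin).map U.mulVecLin ≤ LinearMap.ker A.mulVecLin)
    (hkerB : (LinearMap.ker B.mulVecLin).map U.mulVecLin ≤ LinearMap.ker B.mulVecLin)
    (hPAherm : PA.IsHermitian) (hPAidem : PA * PA = PA)
    (hPArange : LinearMap.range PA.mulVecLin = LinearMap.range A.mulVecLin)
    (hPBherm : PB.IsHermitian) (hPBidem : PB * PB = PB)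
    (hPBrange : LinearMap.range PB.mulVecLin = LinearMap.range B.mulVecLin)
    (hCA : A * U * Astar = C * PA) (hCB : B * U * Bstar = C * PB) :
    IsUnit C := by
  have hA : LinearMap.range A.mulVecLin ≤ LinearMap.range C.mulVecLin :=
    range_le A Astar U C PA hMPA hU hkerA hPAidem hPArange hCA
  have hB : LinearMap.range B.mulVecLin ≤ LinearMap.range C.mulVecLin :=
    range_le B Bstar U C PB hMPB hU hkerB hPBidem hPBrange hCB
  have htop : LinearMap.range (Matrix.fromCols A B).mulVecLin = ⊤ := by
    apply Submodule.eq_top_of_finrank_eq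
    rw [← Matrix.rank, hrank, Module.finrank_pi]
    simp
  rw [← Matrix.mulVec_surjective_iff_isUnit]
  intro y
  have hy : y ∈ LinearMap.range (Matrix.fromCols A B).mulVecLin := htop ▸ Submodule.mem_top
  obtain ⟨v, hv⟩ := hy
  have hv' : A *ᵥ (v ∘ Sum.inl) + B *ᵥ (v ∘ Sum.inr) = y := by
    rw [← Matrix.fromCols_mulVec_sumElim]
    simpa [Sum.elim_comp_inl_inr] using hv
  have h1 : A *ᵥ (v ∘ Sum.inl) ∈ LinearMap.range C.mulVecLin := hA ⟨v ∘ Sum.inl, rfl⟩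
  have h2 : B *ᵥ (v ∘ Sum.inr) ∈ LinearMap.range C.mulVecLin := hB ⟨v ∘ Sum.inr, rfl⟩
  obtain ⟨w, hw⟩ := Submodule.add_mem _ h1 h2
  exact ⟨w, by rw [← hv']; exact hw⟩
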